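/- Let (X, ‖·‖) be a real normed vector space that has nonbranching optimal transport plans (with respect to the group structure of (X,+) and the norm). If p₁,…,p_n are linearly independent extreme points of the closed unit ball and λ₁,…,λ_n are nonzero reals, then ‖Σ_i λ_i p_i‖ = Σ_i |λ_i| ‖p_i‖ = Σ_i |λ_i|. -/

import Mathlib

def IsGroupNorm {G : Type*} [AddCommGroup G] (ν : G → ℝ) : Prop :=
  (∀ g, 0 ≤ ν g) ∧ (∀ g h, ν (g + h) ≤ ν g + ν h) ∧
  (∀ g, ν (-g) = ν g) ∧ (∀ g, ν g = 0 ↔ g = 0)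

def HasNBP {G : Type*} [AddCommGroup G] (ν : G → ℝ) : Prop :=
  ∀ (n : ℕ) (g : Fin n → G), (∑ i, g i) = 0 →
    ∃ f : Fin n → Fin n → G,
      (∀ i j, f i j = - f j i) ∧ (∀ i, f i i = 0) ∧
      (∀ i, g i = ∑ j, f i j) ∧ (∀ i, ν (g i) = ∑ j, ν (f i j))

def HasCZT {G : Type*} [AddCommGroup G] (ν : G → ℝ) : Prop :=
  ∀ a b c : G, a + b + c = 0 →
    ν a + ν b = ν c ∨ ν a + ν c = ν b ∨ ν b + ν c = ν a

def IsIndecomposable {G : Type*} [AddCommGroup G] (ν : G → ℝ) (g : G) : Prop :=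
  ∀ h : G, ν h + ν (g - h) = ν g → h = 0 ∨ h = g

section Aux

variable {X : Type*} [NormedAddCommGroup X] [NormedSpace ℝ X]

lemma aux_neg_extreme {p : X}
    (hp : p ∈ Set.extremePoints ℝ (Metric.closedBall (0:X) 1)) :
    -p ∈ Set.extremePoints ℝ (Metric.closedBall (0:X) 1) := by
  obtain ⟨hmem, he⟩ := hp
  refine ⟨by simpa using hmem, ?_⟩
  intro x1 hx1 x2 hx2 hseg
  have h1 : -x1 ∈ Metric.closedBall (0:X) 1 := by
    simp only [Metric.mem_closedBall, dist_zero_right] at hx1 ⊢; simpa using hx1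
  have h2 : -x2 ∈ Metric.closedBall (0:X) 1 := by
    simp only [Metric.mem_closedBall, dist_zero_right] at hx2 ⊢; simpa using hx2
  have hseg' : p ∈ openSegment ℝ (-x1) (-x2) := by
    obtain ⟨a, b, ha, hb, hab, h⟩ := hseg
    refine ⟨a, b, ha, hb, hab, ?_⟩
    rw [smul_neg, smul_neg, ← neg_add, h, neg_neg]
  have e1 := he h1 h2 hseg'
  rw [← neg_neg x1, e1]

lemma aux_extreme_norm_one {p : X}
    (hp : p ∈ Set.extremePoints ℝ (Metric.closedBall (0:X) 1)) (hne : p ≠ 0) :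
    ‖p‖ = 1 := by
  obtain ⟨hmem, he⟩ := hp
  have hle : ‖p‖ ≤ 1 := by simpa [Metric.mem_closedBall, dist_zero_right] using hmem
  by_contra hne1
  have hlt : ‖p‖ < 1 := lt_of_le_of_ne hle hne1
  set ε : ℝ := 1 - ‖p‖ with hε
  have hεpos : 0 < ε := by simp [hε]; linarith
  have hx1 : (1 + ε) • p ∈ Metric.closedBall (0:X) 1 := by
    simp only [Metric.mem_closedBall, dist_zero_right, norm_smul, Real.norm_eq_abs]
    rw [abs_of_pos (by linarith)]
    have hn0 : 0 ≤ ‖p‖ := norm_nonneg p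
    nlinarith
  have hx2 : (1 - ε) • p ∈ Metric.closedBall (0:X) 1 := by
    simp only [Metric.mem_closedBall, dist_zero_right, norm_smul, Real.norm_eq_abs]
    have hn0 : 0 ≤ ‖p‖ := norm_nonneg p
    rw [abs_of_nonneg (by linarith)]
    nlinarith
  have hseg : p ∈ openSegment ℝ ((1 + ε) • p) ((1 - ε) • p) := by
    refine ⟨1/2, 1/2, by norm_num, by norm_num, by norm_num, ?_⟩
    rw [smul_smul, smul_smul, ← add_smul]
    have : (1/2 : ℝ) * (1 + ε) + 1/2 * (1 - ε) = 1 := by ring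
    rw [this, one_smul]
  have e1 := he hx1 hx2 hseg
  have : ε • p = 0 := by
    have : (1 + ε) • p - (1:ℝ) • p = 0 := by rw [e1, one_smul, sub_self]
    rwa [← sub_smul, add_sub_cancel_left] at this
  rcases smul_eq_zero.mp this with h | h
  · exact absurd h (ne_of_gt hεpos)
  · exact hne h

lemma aux_decomp {p h : X}
    (hp : p ∈ Set.extremePoints ℝ (Metric.closedBall (0:X) 1)) (hne : p ≠ 0)
    (heq : ‖h‖ + ‖p - h‖ = ‖p‖) : h = ‖h‖ • p := by
  have hp1 : ‖p‖ = 1 := aux_extreme_norm_one hp hne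
  by_cases h0 : h = 0
  · simp [h0]
  by_cases hph : p - h = 0
  · have hhp : h = p := by rw [sub_eq_zero] at hph; exact hph.symm
    rw [hhp, hp1, one_smul]
  obtain ⟨hmem, he⟩ := hp
  set a : ℝ := ‖h‖ with ha
  set b : ℝ := ‖p - h‖ with hb
  have hapos : 0 < a := norm_pos_iff.mpr h0
  have hbpos : 0 < b := norm_pos_iff.mpr hph
  have hab : a + b = 1 := by rw [ha, hb, heq, hp1]
  have hx1 : a⁻¹ • h ∈ Metric.closedBall (0:X) 1 := by
    simp only [Metric.mem_closedBall, dist_zero_right, norm_smul, Real.norm_eq_abs,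
      abs_of_pos (inv_pos.mpr hapos)]
    rw [← ha, inv_mul_cancel₀ (ne_of_gt hapos)]
  have hx2 : b⁻¹ • (p - h) ∈ Metric.closedBall (0:X) 1 := by
    simp only [Metric.mem_closedBall, dist_zero_right, norm_smul, Real.norm_eq_abs,
      abs_of_pos (inv_pos.mpr hbpos)]
    rw [← hb, inv_mul_cancel₀ (ne_of_gt hbpos)]
  have hseg : p ∈ openSegment ℝ (a⁻¹ • h) (b⁻¹ • (p - h)) := by
    refine ⟨a, b, hapos, hbpos, hab, ?_⟩
    rw [smul_smul, smul_smul, mul_inv_cancel₀ (ne_of_gt hapos),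
      mul_inv_cancel₀ (ne_of_gt hbpos), one_smul, one_smul, add_sub_cancel]
  have e1 := he hx1 hx2 hseg
  have : a • (a⁻¹ • h) = a • p := by rw [e1]
  rwa [smul_smul, mul_inv_cancel₀ (ne_of_gt hapos), one_smul] at this

lemma aux_decomp' {p h : X} {l : ℝ}
    (hp : p ∈ Set.extremePoints ℝ (Metric.closedBall (0:X) 1)) (hne : p ≠ 0)
    (hl : l ≠ 0) (heq : ‖h‖ + ‖l • p - h‖ = ‖l • p‖) : ∃ c : ℝ, h = c • p := by
  set s : ℝ := if 0 < l then 1 else -1 with hs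
  have hsp : l = |l| * s := by
    rcases lt_or_gt_of_ne hl with hneg | hpos
    · rw [hs, if_neg (not_lt.mpr (le_of_lt hneg)), abs_of_neg hneg]; ring
    · rw [hs, if_pos hpos, abs_of_pos hpos]; ring
  set q : X := s • p with hq
  have hqext : q ∈ Set.extremePoints ℝ (Metric.closedBall (0:X) 1) := by
    rcases lt_or_gt_of_ne hl with hneg | hpos
    · rw [hq, hs, if_neg (not_lt.mpr (le_of_lt hneg))]
      simpa [neg_smul, one_smul] using aux_neg_extreme hp
    · rw [hq, hs, if_pos hpos]; simpa using hp
  have hqne : q ≠ 0 := by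
    rw [hq]
    intro hcon
    rcases smul_eq_zero.mp hcon with h' | h'
    · rw [hs] at h'; split_ifs at h' <;> norm_num at h'
    · exact hne h'
  have habs : 0 < |l| := abs_pos.mpr hl
  have hlq : l • p = |l| • q := by
    rw [hq, smul_smul, ← hsp]
  have heq' : ‖(|l|)⁻¹ • h‖ + ‖q - (|l|)⁻¹ • h‖ = ‖q‖ := by
    have h1 : q - (|l|)⁻¹ • h = (|l|)⁻¹ • (l • p - h) := by
      rw [smul_sub, hlq, smul_smul, inv_mul_cancel₀ (ne_of_gt habs), one_smul]
    rw [h1, norm_smul, norm_smul, Real.norm_eq_abs, abs_of_pos (inv_pos.mpr habs),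
      ← mul_add, heq, hlq, norm_smul, Real.norm_eq_abs, abs_of_pos habs,
      ← mul_assoc, inv_mul_cancel₀ (ne_of_gt habs), one_mul]
  have := aux_decomp hqext hqne heq'
  refine ⟨|l| * ‖(|l|)⁻¹ • h‖ * s, ?_⟩
  have h2 : h = |l| • ((|l|)⁻¹ • h) := by
    rw [smul_smul, mul_inv_cancel₀ (ne_of_gt habs), one_smul]
  conv_lhs => rw [h2, this]
  rw [hq, smul_smul, smul_smul, mul_assoc]

end Aux

theorem stmt7 {X : Type*} [NormedAddCommGroup X] [NormedSpace ℝ X]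
    (hNBP : HasNBP (fun x : X => ‖x‖))
    (n : ℕ) (p : Fin n → X) (hli : LinearIndependent ℝ p)
    (hext : ∀ i, p i ∈ Set.extremePoints ℝ (Metric.closedBall (0:X) 1))
    (lam : Fin n → ℝ) (hlam : ∀ i, lam i ≠ 0) :
    ‖∑ i, lam i • p i‖ = ∑ i, |lam i| * ‖p i‖ ∧
    ‖∑ i, lam i • p i‖ = ∑ i, |lam i| := by
  have hpne : ∀ i, p i ≠ 0 := fun i => hli.ne_zero i
  have hpnorm : ∀ i, ‖p i‖ = 1 := fun i => aux_extreme_norm_one (hext i) (hpne i)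
  set S : X := ∑ i, lam i • p i with hS
  set g : Fin (n+1) → X := Fin.cons (-S) (fun i => lam i • p i) with hg
  have hsum : ∑ j, g j = 0 := by
    rw [hg, Fin.sum_cons, hS, neg_add_cancel]
  obtain ⟨f, hanti, hdiag, hdecomp, hnorm⟩ := hNBP (n+1) g hsum
  simp only at hnorm
  have key : ∀ i j : Fin (n+1), ‖f i j‖ + ‖g i - f i j‖ = ‖g i‖ := by
    intro i j
    have h1 : g i - f i j = ∑ k ∈ Finset.univ.erase j, f i k := by
      rw [hdecomp i, ← Finset.sum_erase_add _ _ (Finset.mem_univ j)]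
      abel
    have h2 : ‖g i - f i j‖ ≤ ‖g i‖ - ‖f i j‖ := by
      rw [h1]
      calc ‖∑ k ∈ Finset.univ.erase j, f i k‖
          ≤ ∑ k ∈ Finset.univ.erase j, ‖f i k‖ := norm_sum_le _ _
        _ = ‖g i‖ - ‖f i j‖ := by
            rw [hnorm i, ← Finset.sum_erase_add _ _ (Finset.mem_univ j)]; ring
    have h3 : ‖g i‖ - ‖f i j‖ ≤ ‖g i - f i j‖ := norm_sub_norm_le _ _
    linarith
  have hgsucc : ∀ i : Fin n, g i.succ = lam i • p i := by
    intro i; rw [hg, Fin.cons_succ]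
  have hmul : ∀ i k : Fin n, ∃ c : ℝ, f i.succ k.succ = c • p i := by
    intro i k
    refine aux_decomp' (hext i) (hpne i) (hlam i) ?_
    have := key i.succ k.succ
    rwa [hgsucc i] at this
  have hzero : ∀ i k : Fin n, f i.succ k.succ = 0 := by
    intro i k
    by_cases hik : i = k
    · subst hik; exact hdiag i.succ
    obtain ⟨c, hc⟩ := hmul i k
    obtain ⟨d, hd⟩ := hmul k i
    have hrel : c • p i + d • p k = 0 := by
      have h := hanti i.succ k.succ
      rw [hc, hd] at h
      rw [h]; abel
    have hc0 : c = 0 := by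
      set v : Fin n → ℝ := fun m => if m = i then c else if m = k then d else 0 with hv
      have hsum2 : ∑ m, v m • p m = c • p i + d • p k := by
        have hterm : ∀ m, v m • p m =
            (if m = i then c • p i else 0) + (if m = k then d • p k else 0) := by
          intro m
          have hki : ¬ k = i := fun h => hik h.symm
          by_cases h1 : m = i
          · have h2 : ¬ m = k := by rw [h1]; exact hik
            simp [hv, h1, h2, hik]
          · by_cases h2 : m = k
            · simp [hv, h1, h2, hki]
            · simp [hv, h1, h2]
        rw [Finset.sum_congr rfl (fun m _ => hterm m), Finset.sum_add_distrib,
          Finset.sum_ite_eq', Finset.sum_ite_eq']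
        simp
      have := Fintype.linearIndependent_iff.mp hli v (by rw [hsum2, hrel]) i
      simpa [hv] using this
    rw [hc, hc0, zero_smul]
  have hg0 : ∀ i : Fin n, g i.succ = f i.succ 0 := by
    intro i
    rw [hdecomp i.succ, Fin.sum_univ_succ]
    rw [Finset.sum_congr rfl (fun k _ => hzero i k)]
    simp
  have hnormsucc : ∀ i : Fin n, ‖g i.succ‖ = |lam i| := by
    intro i
    rw [hgsucc i, norm_smul, Real.norm_eq_abs, hpnorm i, mul_one]
  have hfinal : ‖S‖ = ∑ i : Fin n, |lam i| := by
    have hS0 : ‖g 0‖ = ‖S‖ := by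
      rw [hg, Fin.cons_zero, norm_neg]
    rw [← hS0, hnorm 0, Fin.sum_univ_succ, hdiag 0, norm_zero, zero_add]
    refine Finset.sum_congr rfl (fun k _ => ?_)
    rw [hanti 0 k.succ, norm_neg, ← hg0 k, hnormsucc k]
  constructor
  · rw [hfinal]
    refine Finset.sum_congr rfl (fun i _ => ?_)
    rw [hpnorm i, mul_one]
  · exact hfinal
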